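/- For every integer N ≥ 3 there exist elements g₃, …, g_N ∈ K such that: (1) the family (1, x, y, g₃, …, g_N) is linearly independent over k; (2) σ(gᵢ) − gᵢ = α·D(gᵢ) for every i = 3, …, N; and (3) the subfield of K generated over k by {D(y), y − x·D(y)} ∪ {D(gᵢ), gᵢ − x·D(gᵢ) : i = 3, …, N} is equal to K. (This is the field-theoretic content of the existence of a birational morphism φ = (1 : x : y : g₃ : ⋯ : g_N) : X → P^N with nondegenerate image, with respect to which σ is non-classical and whose Gauss map is birational onto its image.) -/

import Mathlib

open Polynomial

lemma aux_indep {k K : Type*} [Field k] [Field K] [Algebra k K]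
    (p : ℕ) (hp2 : 2 < p) (x : K) (hx : Transcendental k x) (α : k) :
    LinearIndependent k (fun r : ℕ =>
      if r = 0 then (1 : K) else if r = 1 then x
      else x ^ (p ^ r) - algebraMap k K (α ^ (p ^ r - 2)) * x ^ 2) := by
  classical
  have hbig : ∀ r : ℕ, ¬ r = 0 → ¬ r = 1 → 9 ≤ p ^ r := by
    intro r h0 h1
    calc (9 : ℕ) = 3 ^ 2 := by norm_num
    _ ≤ p ^ 2 := Nat.pow_le_pow_left (by omega) 2
    _ ≤ p ^ r := Nat.pow_le_pow_right (by omega) (by omega)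
  rw [linearIndependent_iff']
  intro s f hsum i his
  set q : ℕ → k[X] := fun r =>
    if r = 0 then (1 : k[X]) else if r = 1 then X
    else X ^ (p ^ r) - C (α ^ (p ^ r - 2)) * X ^ 2 with hq
  set Q : k[X] := ∑ r ∈ s, f r • q r with hQ
  have hQ0 : Q = 0 := by
    by_contra hne
    refine hx ⟨Q, hne, ?_⟩
    rw [hQ, map_sum, ← hsum]
    refine Finset.sum_congr rfl fun r hr => ?_
    rw [map_smul]
    congr 1
    by_cases h0 : r = 0
    · simp [hq, h0]
    by_cases h1 : r = 1
    · simp [hq, h0, h1]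
    simp [hq, h0, h1]
  set d : ℕ := if i = 0 then 0 else if i = 1 then 1 else p ^ i with hd
  have hcoeff : Q.coeff d = ∑ r ∈ s, f r * (q r).coeff d := by
    rw [hQ, Polynomial.finset_sum_coeff]
    exact Finset.sum_congr rfl fun r hr => by rw [Polynomial.coeff_smul, smul_eq_mul]
  have hkey : ∀ r ∈ s, (q r).coeff d = if r = i then 1 else 0 := by
    intro r _
    by_cases hi0 : i = 0
    · subst hi0
      have hd0 : d = 0 := by simp [hd]
      rw [hd0]
      by_cases hr0 : r = 0
      · subst hr0; simp [hq]
      by_cases hr1 : r = 1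
      · subst hr1; simp [hq, coeff_X]
      · have h9 := hbig r hr0 hr1
        simp only [hq, if_neg hr0, if_neg hr1, coeff_sub, coeff_X_pow, coeff_C_mul]
        rw [if_neg (by omega : ¬ (0:ℕ) = p ^ r), if_neg (by omega : ¬ (0:ℕ) = 2)]
        ring
    by_cases hi1 : i = 1
    · subst hi1
      have hd1 : d = 1 := by simp [hd]
      rw [hd1]
      by_cases hr0 : r = 0
      · subst hr0; simp [hq, coeff_one]
      by_cases hr1 : r = 1
      · subst hr1; simp [hq, coeff_X]
      · have h9 := hbig r hr0 hr1
        simp only [hq, if_neg hr0, if_neg hr1, coeff_sub, coeff_X_pow, coeff_C_mul]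
        rw [if_neg (by omega : ¬ (1:ℕ) = p ^ r), if_neg (by omega : ¬ (1:ℕ) = 2)]
        ring
    · have h9i := hbig i hi0 hi1
      have hdp : d = p ^ i := by simp [hd, hi0, hi1]
      rw [hdp]
      by_cases hr0 : r = 0
      · subst hr0
        rw [show q 0 = 1 from by simp [hq], coeff_one,
          if_neg (by omega : ¬ p ^ i = 0), if_neg (by omega : ¬ (0:ℕ) = i)]
      by_cases hr1 : r = 1
      · subst hr1
        rw [show q 1 = X from by simp [hq], coeff_X,
          if_neg (by omega : ¬ (1:ℕ) = p ^ i), if_neg (by omega : ¬ (1:ℕ) = i)]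
      · have h9r := hbig r hr0 hr1
        simp only [hq, if_neg hr0, if_neg hr1, coeff_sub, coeff_X_pow, coeff_C_mul]
        by_cases hri : r = i
        · rw [hri, if_pos rfl, if_pos rfl, if_neg (by omega : ¬ p ^ i = 2)]
          ring
        · rw [if_neg (fun h => hri (Nat.pow_right_injective
              (by omega : 2 ≤ p) h).symm), if_neg (by omega : ¬ p ^ i = 2), if_neg hri]
          ring
  have : Q.coeff d = f i := by
    rw [hcoeff, Finset.sum_congr rfl (fun r hr => by rw [hkey r hr])]
    simp only [mul_ite, mul_one, mul_zero]
    rw [Finset.sum_ite_eq' s i f]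
    simp [his]
  rw [hQ0] at this
  simpa using this.symm
theorem stmt12 (k K : Type*) [Field k] [IsAlgClosed k] [Field K] [Algebra k K]
    (p : ℕ) (hp2 : 2 < p) [CharP k p]
    (x : K) (hx : Transcendental k x)
    [FiniteDimensional ↥(IntermediateField.adjoin k ({x} : Set K)) K]
    [Algebra.IsSeparable ↥(IntermediateField.adjoin k ({x} : Set K)) K]
    (D : Derivation k K K) (hDx : D x = 1)
    (y : K) (hy1 : y ∉ Submodule.span k ({1, x} : Set K))
    (hy2 : IntermediateField.adjoin k ({x, y} : Set K) = ⊤)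
    (σ : K ≃ₐ[k] K) (α : k) (hα : α ≠ 0)
    (hσx : σ x = x + algebraMap k K α)
    (hσy : σ y - y = algebraMap k K α * D y)
    (N : ℕ) (hN : 3 ≤ N) :
    ∃ g : ℕ → K,
      -- (1) the family (1, x, y, g₃, …, g_N) is linearly independent over k
      (LinearIndependent k (fun i : Fin (N + 1) =>
        if (i : ℕ) = 0 then (1 : K) else if (i : ℕ) = 1 then x
        else if (i : ℕ) = 2 then y else g (i : ℕ))) ∧
      -- (2) each gᵢ satisfies σ(gᵢ) − gᵢ = α·D(gᵢ)
      (∀ i : ℕ, 3 ≤ i → i ≤ N →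
        σ (g i) - g i = algebraMap k K α * D (g i)) ∧
      -- (3) the data of the Gauss map generates K over k
      IntermediateField.adjoin k
        ({D y, y - x * D y} ∪
          ⋃ i ∈ Set.Icc 3 N, {D (g i), g i - x * D (g i)}) = ⊤ := by
  classical
  haveI : CharP K p := charP_of_injective_algebraMap (algebraMap k K).injective p
  haveI : NeZero p := ⟨by omega⟩
  haveI hfact : Fact p.Prime := CharP.char_is_prime_of_pos k p
  have h2k : (2 : k) ≠ 0 := by
    intro h
    have h2 : ((2 : ℕ) : k) = 0 := by exact_mod_cast h
    have := (CharP.cast_eq_zero_iff k p 2).mp h2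
    have := Nat.le_of_dvd (by norm_num) this
    omega
  set c : K := algebraMap k K α with hc
  set v : ℕ → K := fun r =>
    if r = 0 then (1 : K) else if r = 1 then x
    else x ^ (p ^ r) - algebraMap k K (α ^ (p ^ r - 2)) * x ^ 2 with hvdef
  have hv : LinearIndependent k v := aux_indep p hp2 x hx α
  -- step 2: find an offset t with y outside the relevant span
  obtain ⟨t, ht⟩ : ∃ t : ℕ, y ∉ Submodule.span k (v '' ({0, 1} ∪ Set.Ici (t + 2))) := by
    by_cases hy' : y ∈ Submodule.span k (Set.range v)
    · obtain ⟨l, hl⟩ := Finsupp.mem_span_range_iff_exists_finsupp.mp hy'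
      refine ⟨l.support.sup id, fun hmem => ?_⟩
      obtain ⟨l', hl's, hl'⟩ := (Finsupp.mem_span_image_iff_linearCombination k).mp hmem
      have hly : Finsupp.linearCombination k v l = y := by
        rw [Finsupp.linearCombination_apply]; exact hl
      have hll' : l = l' := by
        have h0 : Finsupp.linearCombination k v (l - l') = 0 := by
          rw [map_sub, hly, hl', sub_self]
        have := linearIndependent_iff.mp hv _ h0
        rwa [sub_eq_zero] at this
      apply hy1
      have himg : v '' ({0, 1} : Set ℕ) = {1, x} := by
        rw [Set.image_pair]
        simp [hvdef]
      rw [← himg, Finsupp.mem_span_image_iff_linearCombination k]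
      refine ⟨l, ?_, hly⟩
      rw [Finsupp.mem_supported]
      intro r hr
      have h1 : r ∈ ({0, 1} : Set ℕ) ∪ Set.Ici (l.support.sup id + 2) := by
        rw [hll'] at hr
        exact (Finsupp.mem_supported k l').mp hl's hr
      have h2 : r ≤ l.support.sup id := by
        rw [hll'] at hr ⊢
        exact Finset.le_sup (f := id) hr
      rw [Set.mem_union] at h1
      rcases h1 with h1 | h1
      · exact h1
      · exact absurd h1 (by simp [Set.mem_Ici]; omega)
    · exact ⟨0, fun hmem => hy' (Submodule.span_mono (Set.image_subset_range _ _) hmem)⟩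
  set g : ℕ → K := fun i => v (t + i) with hgdef
  have hgval : ∀ i : ℕ, 2 ≤ i → g i =
      x ^ (p ^ (t + i)) - algebraMap k K (α ^ (p ^ (t + i) - 2)) * x ^ 2 := by
    intro i hi
    simp only [hgdef, hvdef]
    rw [if_neg (by omega), if_neg (by omega)]
  -- derivative computation, shared by parts 2 and 3
  have hDg : ∀ i : ℕ, 2 ≤ i →
      D (g i) = -(algebraMap k K (α ^ (p ^ (t + i) - 2)) * (2 * x)) := by
    intro i hi
    have hDxq : D (x ^ (p ^ (t + i))) = 0 := by
      rw [Derivation.leibniz_pow, hDx]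
      have hcast : ((p ^ (t + i) : ℕ) : K) = 0 := by
        rw [Nat.cast_pow, CharP.cast_eq_zero K p]
        exact zero_pow (by omega)
      rw [nsmul_eq_mul, hcast, zero_mul]
    have hDx2 : D (x ^ 2) = 2 * x := by
      rw [pow_two, Derivation.leibniz, hDx, smul_eq_mul]
      ring
    rw [hgval i hi, map_sub, hDxq, Derivation.leibniz, Derivation.map_algebraMap,
      hDx2]
    simp only [smul_eq_mul, smul_zero]
    ring
  refine ⟨g, ?_, ?_, ?_⟩
  · -- (1) linear independence
    set e : Fin N → ℕ := fun j =>
      if (j : ℕ) = 0 then 0 else if (j : ℕ) = 1 then 1 else t + 1 + (j : ℕ) with he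
    have heinj : Function.Injective e := by
      intro a b hab
      simp only [he] at hab
      apply Fin.ext
      split_ifs at hab <;> omega
    set w : Fin N → K := v ∘ e with hw
    have hwind : LinearIndependent k w := hv.comp e heinj
    have hyw : y ∉ Submodule.span k (Set.range w) := by
      intro hmem
      apply ht
      refine Submodule.span_mono ?_ hmem
      rintro _ ⟨j, rfl⟩
      refine Set.mem_image_of_mem v ?_
      simp only [he]
      split_ifs with h0 h1
      · exact Or.inl (Or.inl rfl)
      · exact Or.inl (Or.inr rfl)
      · exact Or.inr (by simp [Set.mem_Ici]; omega)
    have hopt := hwind.option hyw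
    set ε : Fin (N + 1) → Option (Fin N) := fun i =>
      if (i : ℕ) = 2 then none
      else some ⟨if (i : ℕ) < 2 then (i : ℕ) else (i : ℕ) - 1, by have := i.isLt; split_ifs <;> omega⟩ with hε
    have hεinj : Function.Injective ε := by
      intro a b hab
      simp only [hε] at hab
      by_cases ha2 : (a : ℕ) = 2 <;> by_cases hb2 : (b : ℕ) = 2
      · exact Fin.ext (by omega)
      · rw [if_pos ha2, if_neg hb2] at hab
        exact absurd hab (by simp)
      · rw [if_neg ha2, if_pos hb2] at hab
        exact absurd hab (by simp)
      · rw [if_neg ha2, if_neg hb2] at hab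
        simp only [Option.some.injEq, Fin.mk.injEq] at hab
        have ha := a.isLt
        have hb := b.isLt
        apply Fin.ext
        split_ifs at hab <;> omega
    have hcomp : (fun o => Option.casesOn' o y w) ∘ ε = fun i : Fin (N + 1) =>
        if (i : ℕ) = 0 then (1 : K) else if (i : ℕ) = 1 then x
        else if (i : ℕ) = 2 then y else g (i : ℕ) := by
      funext i
      simp only [Function.comp_apply, hε]
      by_cases h2 : (i : ℕ) = 2
      · rw [if_pos h2, if_neg (by omega : ¬ (i : ℕ) = 0), if_neg (by omega : ¬ (i : ℕ) = 1),
          if_pos h2]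
        rfl
      · rw [if_neg h2]
        simp only [Option.casesOn'_some, hw, Function.comp_apply, he]
        by_cases h0 : (i : ℕ) = 0
        · simp [h0, hvdef]
        by_cases h1 : (i : ℕ) = 1
        · simp [h0, h1, hvdef]
        · have h3 : ¬ (i : ℕ) < 2 := by omega
          have h4 : ¬ ((i : ℕ) - 1 = 0) := by omega
          have h5 : ¬ ((i : ℕ) - 1 = 1) := by omega
          have h6 : t + 1 + ((i : ℕ) - 1) = t + (i : ℕ) := by omega
          simp only [if_neg h3, if_neg h4, if_neg h5, if_neg h0, if_neg h1, if_neg h2, h6]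
          rfl
    rw [← hcomp]
    exact hopt.comp ε hεinj
  · -- (2) the functional equation
    intro i h3 hiN
    have hi2 : 2 ≤ i := by omega
    have hq2 : 2 ≤ p ^ (t + i) := le_trans (by omega) (Nat.le_self_pow (by omega) p)
    have hσg : σ (g i) = (x + c) ^ (p ^ (t + i))
        - c ^ (p ^ (t + i) - 2) * (x + c) ^ 2 := by
      rw [hgval i hi2]
      simp only [map_sub, map_mul, map_pow, AlgEquiv.commutes, hσx]
      rfl
    have hfrob : (x + c) ^ (p ^ (t + i)) = x ^ (p ^ (t + i)) + c ^ (p ^ (t + i)) := by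
      rw [add_pow_char_pow]
    have hca : ∀ m : ℕ, algebraMap k K (α ^ m) = c ^ m := fun m => map_pow _ _ _
    obtain ⟨m, hm⟩ : ∃ m, p ^ (t + i) = m + 2 := ⟨p ^ (t + i) - 2, by omega⟩
    have hm2 : p ^ (t + i) - 2 = m := by omega
    rw [hσg, hDg i hi2, hgval i hi2, hfrob, hca, hm2, hm]
    ring
  · -- (3) generation of K
    set S : Set K := {D y, y - x * D y} ∪
      ⋃ i ∈ Set.Icc 3 N, {D (g i), g i - x * D (g i)} with hS
    have h3N : (3 : ℕ) ∈ Set.Icc 3 N := by simp [Set.mem_Icc]; omega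
    have hDg3mem : D (g 3) ∈ IntermediateField.adjoin k S := by
      apply IntermediateField.subset_adjoin
      exact Or.inr (Set.mem_biUnion h3N (Set.mem_insert _ _))
    set a3 : k := α ^ (p ^ (t + 3) - 2) with ha3
    have hne : (-(2 * a3) : k) ≠ 0 :=
      neg_ne_zero.mpr (mul_ne_zero h2k (pow_ne_zero _ hα))
    have hx_mem : x ∈ IntermediateField.adjoin k S := by
      have hxeq : x = algebraMap k K (-(2 * a3))⁻¹ * D (g 3) := by
        rw [hDg 3 (by omega), ← ha3]
        have h1 : -(algebraMap k K a3 * (2 * x)) = algebraMap k K (-(2 * a3)) * x := by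
          rw [map_neg, map_mul, map_ofNat]
          ring
        rw [h1, ← mul_assoc, ← map_mul, inv_mul_cancel₀ hne, map_one, one_mul]
      rw [hxeq]
      exact mul_mem (IntermediateField.algebraMap_mem _ _) hDg3mem
    have hy_mem : y ∈ IntermediateField.adjoin k S := by
      have h1 : y - x * D y ∈ IntermediateField.adjoin k S :=
        IntermediateField.subset_adjoin _ _ (Or.inl (Set.mem_insert_iff.mpr (Or.inr rfl)))
      have h2 : D y ∈ IntermediateField.adjoin k S :=
        IntermediateField.subset_adjoin _ _ (Or.inl (Set.mem_insert _ _))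
      have hyeq : y = (y - x * D y) + x * D y := by ring
      rw [hyeq]
      exact add_mem h1 (mul_mem hx_mem h2)
    rw [eq_top_iff, ← hy2, IntermediateField.adjoin_le_iff]
    rintro z (rfl | hz)
    · exact hx_mem
    · rw [Set.mem_singleton_iff] at hz
      rw [hz]
      exact hy_mem
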